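/- Let A, D ∈ ℝ^{n×n} be diagonal with strictly positive diagonal entries and B, C ∈ ℝ^{n×n} entrywise nonnegative. If the spectral radius of M = D⁻¹ C A⁻¹ B satisfies ρ(M) > 1, then the block matrix J = [[−A, B], [C, −D]] has a real eigenvalue λ* > 0 with an eigenvector (x*, y*) satisfying x* ≥ 0, y* ≥ 0 entrywise and y* ≠ 0. -/

import Mathlib

set_option linter.unusedSectionVars false
set_option maxHeartbeats 1000000

open Matrix Finset Filter Polynomial

section PF
variable {ι : Type*} [Fintype ι] [DecidableEq ι] [Nonempty ι]

lemma stdSimplex_exists_pos {v : ι → ℝ} (hv : v ∈ stdSimplex ℝ ι) : ∃ j, 0 < v j := by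
  by_contra h
  push_neg at h
  have : ∑ i, v i = 0 := Finset.sum_eq_zero fun i _ => le_antisymm (h i) (hv.1 i)
  rw [hv.2] at this; norm_num at this

lemma pf_pos (P : Matrix ι ι ℝ) (hP : ∀ i j, 0 < P i j) :
    ∃ r v, v ∈ stdSimplex ℝ ι ∧ P *ᵥ v = r • v ∧
      ∀ t u, u ∈ stdSimplex ℝ ι → (∀ i, t * u i ≤ (P *ᵥ u) i) → t ≤ r := by
  classical
  set T : Set ℝ := {t | ∃ u, u ∈ stdSimplex ℝ ι ∧ ∀ i, t * u i ≤ (P *ᵥ u) i} with hT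
  have hunif : (fun _ : ι => ((Fintype.card ι : ℝ))⁻¹) ∈ stdSimplex ℝ ι := by
    constructor
    · intro i; positivity
    · have h0 : (0:ℝ) < (Fintype.card ι : ℝ) := by exact_mod_cast Fintype.card_pos
      rw [Finset.sum_const, Finset.card_univ, nsmul_eq_mul, mul_inv_cancel₀ h0.ne']
  have hT0 : (0 : ℝ) ∈ T := by
    refine ⟨_, hunif, fun i => ?_⟩
    rw [zero_mul]
    exact Finset.sum_nonneg fun j _ => mul_nonneg (hP i j).le (by positivity)
  have hTne : T.Nonempty := ⟨0, hT0⟩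
  have hle_one : ∀ u : ι → ℝ, u ∈ stdSimplex ℝ ι → ∀ j, u j ≤ 1 := by
    intro u hu j
    rw [← hu.2]
    exact Finset.single_le_sum (fun i _ => hu.1 i) (Finset.mem_univ j)
  have hTbdd : BddAbove T := by
    refine ⟨∑ i, ∑ j, P i j, fun t ht => ?_⟩
    obtain ⟨u, hu, hineq⟩ := ht
    calc t = ∑ i, t * u i := by rw [← Finset.mul_sum, hu.2, mul_one]
    _ ≤ ∑ i, (P *ᵥ u) i := Finset.sum_le_sum fun i _ => hineq i
    _ = ∑ i, ∑ j, P i j * u j := rfl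
    _ ≤ ∑ i, ∑ j, P i j := by
        refine Finset.sum_le_sum fun i _ => Finset.sum_le_sum fun j _ => ?_
        exact mul_le_of_le_one_right (hP i j).le (hle_one u hu j)
  set r := sSup T with hr
  -- choose approximating sequence
  have hseq : ∀ k : ℕ, ∃ u, u ∈ stdSimplex ℝ ι ∧ ∀ i, (r - 1/(k+1)) * u i ≤ (P *ᵥ u) i := by
    intro k
    have h1 : r - 1/(k+1) < r := by
      have : (0:ℝ) < 1/(k+1) := by positivity
      linarith
    obtain ⟨t, ht, hlt⟩ := exists_lt_of_lt_csSup hTne h1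
    obtain ⟨u, hu, hineq⟩ := ht
    exact ⟨u, hu, fun i => le_trans (by nlinarith [hu.1 i]) (hineq i)⟩
  choose u hu hineq using hseq
  obtain ⟨v, hvmem, φ, hφ, hφtend⟩ := (isCompact_stdSimplex ℝ ι).tendsto_subseq hu
  have htophi : Tendsto (fun k : ℕ => 1/((φ k : ℝ)+1)) atTop (nhds 0) := by
    refine squeeze_zero (fun k => by positivity) (fun k => ?_) tendsto_one_div_add_atTop_nhds_zero_nat
    have : (k:ℝ) ≤ (φ k : ℝ) := by exact_mod_cast hφ.le_apply
    gcongr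
  have hvcoord : ∀ i, Tendsto (fun k => u (φ k) i) atTop (nhds (v i)) := by
    intro i
    exact (tendsto_pi_nhds.mp hφtend) i
  have hv : ∀ i, r * v i ≤ (P *ᵥ v) i := by
    intro i
    have h1 : Tendsto (fun k => (r - 1/((φ k : ℝ)+1)) * u (φ k) i) atTop (nhds (r * v i)) := by
      have hr' : Tendsto (fun k => r - 1/((φ k : ℝ)+1)) atTop (nhds r) := by
        simpa using (tendsto_const_nhds (x := r) (f := atTop)).sub htophi
      exact hr'.mul (hvcoord i)
    have h2 : Tendsto (fun k => (P *ᵥ u (φ k)) i) atTop (nhds ((P *ᵥ v) i)) := by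
      have : ∀ w : ι → ℝ, (P *ᵥ w) i = ∑ j, P i j * w j := fun w => rfl
      simp only [this]
      exact tendsto_finset_sum _ fun j _ => tendsto_const_nhds.mul (hvcoord j)
    exact le_of_tendsto_of_tendsto' h1 h2 (fun k => hineq (φ k) i)
  -- show equality
  have heq : P *ᵥ v = r • v := by
    by_contra hne
    have hex : ∃ i₀, r * v i₀ < (P *ᵥ v) i₀ := by
      by_contra hc
      push_neg at hc
      apply hne
      funext i
      have h := le_antisymm (hc i) (hv i)
      simpa [smul_eq_mul] using h
    obtain ⟨i₀, hi₀⟩ := hex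
    set w := P *ᵥ v with hw
    obtain ⟨j₀, hj₀⟩ := stdSimplex_exists_pos hvmem
    have hwpos : ∀ i, 0 < w i := by
      intro i
      exact Finset.sum_pos' (fun j _ => mul_nonneg (hP i j).le (hvmem.1 j))
        ⟨j₀, Finset.mem_univ j₀, mul_pos (hP i j₀) hj₀⟩
    have hPw : ∀ i, r * w i < (P *ᵥ w) i := by
      intro i
      have hdiff : (P *ᵥ w) i - r * w i = ∑ j, P i j * (w j - r * v j) := by
        have h1 : (P *ᵥ w) i = ∑ j, P i j * w j := rfl
        have h2 : r * w i = ∑ j, r * (P i j * v j) := by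
          rw [← Finset.mul_sum]; rfl
        rw [h1, h2, ← Finset.sum_sub_distrib]
        exact Finset.sum_congr rfl fun j _ => by ring
      have hpos : 0 < ∑ j, P i j * (w j - r * v j) :=
        Finset.sum_pos' (fun j _ => mul_nonneg (hP i j).le (by linarith [hv j]))
          ⟨i₀, Finset.mem_univ i₀, mul_pos (hP i i₀) (by linarith)⟩
      linarith
    set δ := Finset.univ.inf' Finset.univ_nonempty (fun i => ((P *ᵥ w) i - r * w i) / w i) with hδdef
    have hδ : 0 < δ := by
      rw [hδdef, Finset.lt_inf'_iff]
      intro i _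
      exact div_pos (by linarith [hPw i]) (hwpos i)
    have hsub : ∀ i, (r + δ) * w i ≤ (P *ᵥ w) i := by
      intro i
      have h1 : δ ≤ ((P *ᵥ w) i - r * w i) / w i :=
        Finset.inf'_le _ (Finset.mem_univ i)
      rw [le_div_iff₀ (hwpos i)] at h1
      nlinarith
    set s := ∑ i, w i with hs
    have hspos : 0 < s := Finset.sum_pos (fun i _ => hwpos i) Finset.univ_nonempty
    have hmem : s⁻¹ • w ∈ stdSimplex ℝ ι := by
      constructor
      · intro i
        exact mul_nonneg (by positivity) (hwpos i).le
      · simp only [Pi.smul_apply, smul_eq_mul, ← Finset.mul_sum, ← hs]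
        exact inv_mul_cancel₀ hspos.ne'
    have : r + δ ∈ T := by
      refine ⟨s⁻¹ • w, hmem, fun i => ?_⟩
      rw [Matrix.mulVec_smul]
      simp only [Pi.smul_apply, smul_eq_mul]
      have := hsub i
      nlinarith [inv_nonneg.mpr hspos.le]
    have := le_csSup hTbdd this
    linarith
  exact ⟨r, v, hvmem, heq, fun t u' hu' hineq' => le_csSup hTbdd ⟨u', hu', hineq'⟩⟩

end PF

section PF2
variable {ι : Type*} [Fintype ι] [DecidableEq ι] [Nonempty ι]

lemma pf_nonneg (N : Matrix ι ι ℝ) (hN : ∀ i j, 0 ≤ N i j) (t₀ : ℝ)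
    (u : ι → ℝ) (hu : u ∈ stdSimplex ℝ ι) (hsub : ∀ i, t₀ * u i ≤ (N *ᵥ u) i) :
    ∃ r, t₀ ≤ r ∧ ∃ v, v ∈ stdSimplex ℝ ι ∧ N *ᵥ v = r • v := by
  classical
  set E : Matrix ι ι ℝ := Matrix.of (fun _ _ => (1:ℝ)) with hE
  set P : ℕ → Matrix ι ι ℝ := fun k => N + (1/(k+1) : ℝ) • E with hPdef
  have hPpos : ∀ k i j, 0 < P k i j := by
    intro k i j
    have : P k i j = N i j + 1/(k+1) := by simp [hPdef, hE]
    rw [this]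
    have := hN i j
    positivity
  have hPu : ∀ k (x : ι → ℝ), (P k *ᵥ x) = (N *ᵥ x) + (1/(k+1) : ℝ) • (fun i => ∑ j, x j) := by
    intro k x
    funext i
    simp only [hPdef, Matrix.add_mulVec, Matrix.smul_mulVec, hE, Matrix.mulVec,
      dotProduct, Pi.add_apply, Pi.smul_apply, smul_eq_mul, Matrix.of_apply, one_mul]
    rw [Finset.mul_sum]
    simp [Finset.sum_add_distrib, add_mul, Finset.mul_sum]
  have hstep : ∀ k : ℕ, ∃ r v, v ∈ stdSimplex ℝ ι ∧ P k *ᵥ v = r • v ∧ t₀ ≤ r ∧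
      r ≤ (∑ i, ∑ j, N i j) + (Fintype.card ι)^2 := by
    intro k
    obtain ⟨r, v, hvmem, heq, hupper⟩ := pf_pos (P k) (hPpos k)
    have ht₀ : t₀ ≤ r := by
      refine hupper t₀ u hu fun i => ?_
      rw [hPu]
      have h1 : (0:ℝ) ≤ 1/(k+1) * ∑ j, u j := by
        rw [hu.2]; positivity
      have := hsub i
      simp only [Pi.add_apply, Pi.smul_apply, smul_eq_mul]
      linarith
    have hle_one : ∀ j, v j ≤ 1 := by
      intro j
      rw [← hvmem.2]
      exact Finset.single_le_sum (fun i _ => hvmem.1 i) (Finset.mem_univ j)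
    have hbound : r ≤ (∑ i, ∑ j, N i j) + (Fintype.card ι)^2 := by
      have h1 : r = ∑ i, r * v i := by rw [← Finset.mul_sum, hvmem.2, mul_one]
      have h2 : ∀ i, r * v i = (P k *ᵥ v) i := by
        intro i
        rw [heq]; simp [smul_eq_mul]
      have h3 : ∀ i j, P k i j * v j ≤ N i j + 1 := by
        intro i j
        have hP1 : P k i j ≤ N i j + 1 := by
          have : P k i j = N i j + 1/(k+1) := by simp [hPdef, hE]
          rw [this]
          have : (1:ℝ)/(k+1) ≤ 1 := by
            rw [div_le_one (by positivity)]
            simp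
          linarith
        calc P k i j * v j ≤ P k i j * 1 := by
              have := (hPpos k i j).le
              exact mul_le_mul_of_nonneg_left (hle_one j) this
        _ = P k i j := mul_one _
        _ ≤ N i j + 1 := hP1
      calc r = ∑ i, r * v i := h1
      _ = ∑ i, (P k *ᵥ v) i := Finset.sum_congr rfl fun i _ => h2 i
      _ = ∑ i, ∑ j, P k i j * v j := rfl
      _ ≤ ∑ i, ∑ j, (N i j + 1) := by
          exact Finset.sum_le_sum fun i _ => Finset.sum_le_sum fun j _ => h3 i j
      _ = (∑ i, ∑ j, N i j) + (Fintype.card ι)^2 := by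
          simp [Finset.sum_add_distrib, Finset.sum_const, Finset.card_univ]
          ring
    exact ⟨r, v, hvmem, heq, ht₀, hbound⟩
  choose r v hvmem heq ht₀ hbound using hstep
  set Cb := (∑ i, ∑ j, N i j) + ((Fintype.card ι):ℝ)^2 with hCb
  have hcompact : IsCompact ((stdSimplex ℝ ι) ×ˢ (Set.Icc t₀ Cb)) :=
    (isCompact_stdSimplex ℝ ι).prod isCompact_Icc
  have hmem : ∀ k, ((v k, r k) : (ι → ℝ) × ℝ) ∈ (stdSimplex ℝ ι) ×ˢ (Set.Icc t₀ Cb) := by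
    intro k
    exact ⟨hvmem k, ⟨ht₀ k, by exact_mod_cast hbound k⟩⟩
  obtain ⟨⟨vl, rl⟩, hlmem, φ, hφ, hφtend⟩ := hcompact.tendsto_subseq hmem
  have hvl : Tendsto (fun k => v (φ k)) atTop (nhds vl) :=
    (continuous_fst.tendsto _).comp hφtend
  have hrl : Tendsto (fun k => r (φ k)) atTop (nhds rl) :=
    (continuous_snd.tendsto _).comp hφtend
  have hvcoord : ∀ i, Tendsto (fun k => v (φ k) i) atTop (nhds (vl i)) :=
    fun i => (tendsto_pi_nhds.mp hvl) i
  have htophi : Tendsto (fun k : ℕ => 1/((φ k : ℝ)+1)) atTop (nhds 0) := by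
    refine squeeze_zero (fun k => by positivity) (fun k => ?_) tendsto_one_div_add_atTop_nhds_zero_nat
    have : (k:ℝ) ≤ (φ k : ℝ) := by exact_mod_cast hφ.le_apply
    gcongr
  have heql : N *ᵥ vl = rl • vl := by
    funext i
    have hfun : ∀ k, (N *ᵥ v (φ k)) i + 1/((φ k : ℝ)+1) = r (φ k) * v (φ k) i := by
      intro k
      have := congrFun (heq (φ k)) i
      rw [hPu] at this
      simpa [smul_eq_mul, (hvmem (φ k)).2] using this
    have hL : Tendsto (fun k => (N *ᵥ v (φ k)) i + 1/((φ k : ℝ)+1)) atTop (nhds ((N *ᵥ vl) i)) := by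
      have h2 : Tendsto (fun k => (N *ᵥ v (φ k)) i) atTop (nhds ((N *ᵥ vl) i)) := by
        have hrfl : ∀ w : ι → ℝ, (N *ᵥ w) i = ∑ j, N i j * w j := fun w => rfl
        simp only [hrfl]
        exact tendsto_finset_sum _ fun j _ => tendsto_const_nhds.mul (hvcoord j)
      simpa using h2.add htophi
    have hR : Tendsto (fun k => r (φ k) * v (φ k) i) atTop (nhds (rl * vl i)) :=
      hrl.mul (hvcoord i)
    have := tendsto_nhds_unique (hL.congr (fun k => hfun k)) hR
    simpa [smul_eq_mul] using this
  exact ⟨rl, hlmem.2.1, vl, hlmem.1, heql⟩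
end PF2

section PF3
variable {ι : Type*} [Fintype ι] [DecidableEq ι]

lemma eigenvector_of_isRoot {Mc : Matrix ι ι ℂ} {μ : ℂ}
    (h : Mc.charpoly.IsRoot μ) : ∃ u : ι → ℂ, u ≠ 0 ∧ Mc *ᵥ u = μ • u := by
  have hdet : (Matrix.diagonal (fun _ : ι => μ) - Mc).det = 0 := by
    have heval : (Mc.charpoly).eval μ = (Matrix.diagonal (fun _ : ι => μ) - Mc).det := by
      rw [Matrix.charpoly, ← Polynomial.coe_evalRingHom, RingHom.map_det]
      congr 1
      ext i j
      by_cases hij : i = j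
      · subst hij
        simp [Matrix.charmatrix_apply_eq]
      · simp [Matrix.charmatrix_apply_ne _ _ _ hij, Matrix.diagonal_apply_ne _ hij]
    rw [← heval]
    exact h
  obtain ⟨u, hu, hmul⟩ := (Matrix.exists_mulVec_eq_zero_iff).mpr hdet
  refine ⟨u, hu, ?_⟩
  have := hmul
  rw [Matrix.sub_mulVec, sub_eq_zero] at this
  rw [← this]
  funext i
  simp [Matrix.mulVec_diagonal]
end PF3

/-- The spectral radius of a real square matrix: the supremum of the absolute values
of its complex eigenvalues (roots of the characteristic polynomial over `ℂ`). -/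
noncomputable def specRad {n : ℕ} (M : Matrix (Fin n) (Fin n) ℝ) : ℝ :=
  sSup {x : ℝ | ∃ μ : ℂ, (M.map (Complex.ofReal)).charpoly.IsRoot μ ∧ x = ‖μ‖}

/-- Schur–Perron positive eigenvalue: with `A, D` diagonal positive and `B, C`
entrywise nonnegative, if `ρ(D⁻¹ C A⁻¹ B) > 1` then the block matrix
`J = [[−A, B], [C, −D]]` has a real eigenvalue `λ* > 0` with a nonnegative
eigenvector `(x*, y*)`, `y* ≠ 0`. -/
theorem schur_perron_positive_eigenvalue (n : ℕ) (A B C D : Matrix (Fin n) (Fin n) ℝ)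
    (hAdiag : ∀ i j, i ≠ j → A i j = 0) (hApos : ∀ i, 0 < A i i)
    (hDdiag : ∀ i j, i ≠ j → D i j = 0) (hDpos : ∀ i, 0 < D i i)
    (hB : ∀ i j, 0 ≤ B i j) (hC : ∀ i j, 0 ≤ C i j)
    (hρ : 1 < specRad (D⁻¹ * C * A⁻¹ * B)) :
    ∃ lam : ℝ, 0 < lam ∧ ∃ x y : Fin n → ℝ,
      (∀ i, 0 ≤ x i) ∧ (∀ i, 0 ≤ y i) ∧ y ≠ 0 ∧
      (-A) *ᵥ x + B *ᵥ y = lam • x ∧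
      C *ᵥ x + (-D) *ᵥ y = lam • y := by
  classical
  set M := D⁻¹ * C * A⁻¹ * B with hMdef
  -- a root of large absolute value
  have hSne : {x : ℝ | ∃ μ : ℂ, (M.map (Complex.ofReal)).charpoly.IsRoot μ ∧
      x = ‖μ‖}.Nonempty := by
    by_contra h
    rw [Set.not_nonempty_iff_eq_empty] at h
    have h2 : specRad M = 0 := by rw [specRad, h, Real.sSup_empty]
    rw [h2] at hρ; linarith
  obtain ⟨ρ', hρ'mem, hρ'gt⟩ := exists_lt_of_lt_csSup hSne hρ
  obtain ⟨μ, hroot, hρ'eq⟩ := hρ'mem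
  obtain ⟨uC, huC, heig⟩ := eigenvector_of_isRoot hroot
  set w : Fin n → ℝ := fun i => ‖uC i‖ with hwdef
  have hw0 : ∀ i, 0 ≤ w i := fun i => norm_nonneg _
  obtain ⟨i₀, hi₀⟩ : ∃ i, uC i ≠ 0 := by
    by_contra hc; push_neg at hc; exact huC (funext hc)
  have hwi₀ : 0 < w i₀ := norm_pos_iff.mpr hi₀
  haveI : Nonempty (Fin n) := ⟨i₀⟩
  haveI : Nonempty (Fin n ⊕ Fin n) := ⟨Sum.inl i₀⟩
  have hρ'pos : (0:ℝ) < ρ' := by linarith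
  -- diagonal structure
  set a : Fin n → ℝ := fun i => A i i with hadef
  set d : Fin n → ℝ := fun i => D i i with hddef
  have hA' : A = Matrix.diagonal a := by
    ext i j
    by_cases hij : i = j
    · subst hij; simp [hadef]
    · rw [Matrix.diagonal_apply_ne _ hij]; exact hAdiag i j hij
  have hD' : D = Matrix.diagonal d := by
    ext i j
    by_cases hij : i = j
    · subst hij; simp [hddef]
    · rw [Matrix.diagonal_apply_ne _ hij]; exact hDdiag i j hij
  have hAinv : A⁻¹ = Matrix.diagonal (fun i => (a i)⁻¹) := by
    rw [hA']
    apply Matrix.inv_eq_right_inv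
    rw [Matrix.diagonal_mul_diagonal]
    ext i j
    by_cases hij : i = j
    · subst hij; simp [mul_inv_cancel₀ (hApos i).ne']; exact mul_inv_cancel₀ (hApos i).ne'
    · simp [Matrix.diagonal_apply_ne _ hij, Matrix.one_apply_ne hij]
  have hDinv : D⁻¹ = Matrix.diagonal (fun i => (d i)⁻¹) := by
    rw [hD']
    apply Matrix.inv_eq_right_inv
    rw [Matrix.diagonal_mul_diagonal]
    ext i j
    by_cases hij : i = j
    · subst hij; simp [mul_inv_cancel₀ (hDpos i).ne']; exact mul_inv_cancel₀ (hDpos i).ne'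
    · simp [Matrix.diagonal_apply_ne _ hij, Matrix.one_apply_ne hij]
  have hM : ∀ i j, M i j = ∑ k, (d i)⁻¹ * (C i k * ((a k)⁻¹ * B k j)) := by
    intro i j
    rw [hMdef, hAinv, hDinv, Matrix.mul_apply]
    refine Finset.sum_congr rfl fun k _ => ?_
    rw [Matrix.mul_diagonal, Matrix.diagonal_mul]
    ring
  have hMnn : ∀ i j, 0 ≤ M i j := by
    intro i j
    rw [hM i j]
    refine Finset.sum_nonneg fun k _ => ?_
    have h1 : (0:ℝ) ≤ (d i)⁻¹ := inv_nonneg.mpr (hDpos i).le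
    have h2 : (0:ℝ) ≤ (a k)⁻¹ := inv_nonneg.mpr (hApos k).le
    exact mul_nonneg h1 (mul_nonneg (hC i k) (mul_nonneg h2 (hB k j)))
  -- subinvariant vector for M
  have hMw : ∀ i, ρ' * w i ≤ (M *ᵥ w) i := by
    intro i
    have h1 : ρ' * w i = ‖(((M.map Complex.ofReal) *ᵥ uC) i)‖ := by
      rw [heig, hρ'eq]
      show ‖μ‖ * ‖uC i‖ = ‖(μ • uC) i‖
      rw [Pi.smul_apply, smul_eq_mul, norm_mul]
    rw [h1]
    have h2 : ((M.map Complex.ofReal) *ᵥ uC) i = ∑ j, Complex.ofReal (M i j) * uC j := rfl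
    rw [h2]
    calc ‖∑ j, Complex.ofReal (M i j) * uC j‖
        ≤ ∑ j, ‖Complex.ofReal (M i j) * uC j‖ := norm_sum_le _ _
    _ = ∑ j, M i j * w j := by
        refine Finset.sum_congr rfl fun j _ => ?_
        rw [norm_mul, Complex.norm_real, Real.norm_eq_abs, abs_of_nonneg (hMnn i j)]
    _ = (M *ᵥ w) i := rfl
  -- parameters
  set θ : ℝ := (1 + ρ'⁻¹)/2 with hθdef
  have hρinv : ρ'⁻¹ < 1 := by
    rw [inv_lt_one_iff₀]; right; exact hρ'gt
  have hθpos : 0 < θ := by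
    have : (0:ℝ) < ρ'⁻¹ := inv_pos.mpr hρ'pos
    rw [hθdef]; linarith
  have hθlt1 : θ < 1 := by rw [hθdef]; linarith
  have hθρ : 1 < θ * ρ' := by
    have h1 : θ * ρ' = (ρ' + 1)/2 := by
      rw [hθdef]; field_simp
    rw [h1]; linarith
  clear_value θ
  set g : Fin n → ℝ := fun i => (B *ᵥ w) i with hgdef
  have hg : ∀ i, 0 ≤ g i := by
    intro i
    show (0:ℝ) ≤ ∑ j, B i j * w j
    exact Finset.sum_nonneg fun j _ => mul_nonneg (hB i j) (hw0 j)
  set x₀ : Fin n → ℝ := fun i => θ * ((a i)⁻¹ * g i) with hx₀def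
  have hx₀ : ∀ i, 0 ≤ x₀ i := fun i =>
    mul_nonneg hθpos.le (mul_nonneg (inv_nonneg.mpr (hApos i).le) (hg i))
  set aMin := Finset.univ.inf' Finset.univ_nonempty a with haMin
  set dMin := Finset.univ.inf' Finset.univ_nonempty d with hdMin
  have haMinpos : 0 < aMin := by
    rw [haMin, Finset.lt_inf'_iff]; exact fun i _ => hApos i
  have hdMinpos : 0 < dMin := by
    rw [hdMin, Finset.lt_inf'_iff]; exact fun i _ => hDpos i
  have haMin_le : ∀ i, aMin ≤ a i := fun i => Finset.inf'_le _ (Finset.mem_univ i)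
  have hdMin_le : ∀ i, dMin ≤ d i := fun i => Finset.inf'_le _ (Finset.mem_univ i)
  clear_value aMin dMin
  set ε : ℝ := min ((1-θ)*aMin/θ) ((θ*ρ'-1)*dMin) with hεdef
  have hε : 0 < ε := by
    rw [hεdef]
    exact lt_min (div_pos (mul_pos (by linarith) haMinpos) hθpos)
      (mul_pos (by linarith) hdMinpos)
  have hεle1 : ε ≤ (1-θ)*aMin/θ := by rw [hεdef]; exact min_le_left _ _
  have hεle2 : ε ≤ (θ*ρ'-1)*dMin := by rw [hεdef]; exact min_le_right _ _
  clear_value ε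
  set c : ℝ := (Finset.univ.sup' Finset.univ_nonempty a) +
      (Finset.univ.sup' Finset.univ_nonempty d) with hcdef
  have hca : ∀ i, a i ≤ c := by
    intro i
    have h1 : a i ≤ Finset.univ.sup' Finset.univ_nonempty a := Finset.le_sup' _ (Finset.mem_univ i)
    have h2 : d i₀ ≤ Finset.univ.sup' Finset.univ_nonempty d := Finset.le_sup' _ (Finset.mem_univ i₀)
    have := hDpos i₀
    rw [hcdef]; linarith
  have hcd : ∀ i, d i ≤ c := by
    intro i
    have h1 : d i ≤ Finset.univ.sup' Finset.univ_nonempty d := Finset.le_sup' _ (Finset.mem_univ i)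
    have h2 : a i₀ ≤ Finset.univ.sup' Finset.univ_nonempty a := Finset.le_sup' _ (Finset.mem_univ i₀)
    have := hApos i₀
    rw [hcdef]; linarith
  clear_value c
  -- the nonnegative block matrix N = J + c I
  set N : Matrix (Fin n ⊕ Fin n) (Fin n ⊕ Fin n) ℝ :=
    Matrix.fromBlocks (c • (1 : Matrix (Fin n) (Fin n) ℝ) - A) B C
      (c • (1 : Matrix (Fin n) (Fin n) ℝ) - D) with hNdef
  have hone : ∀ (X : Matrix (Fin n) (Fin n) ℝ) (e : Fin n → ℝ),
      ∀ i, ((c • (1 : Matrix (Fin n) (Fin n) ℝ) - X) *ᵥ e) i = c * e i - (X *ᵥ e) i := by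
    intro X e i
    rw [Matrix.sub_mulVec, Matrix.smul_mulVec, Matrix.one_mulVec]
    simp [smul_eq_mul]
  have hNnn : ∀ p q, 0 ≤ N p q := by
    rintro (i | i) (j | j) <;> rw [hNdef]
    · rw [Matrix.fromBlocks_apply₁₁]
      by_cases hij : i = j
      · subst hij
        simp only [Matrix.sub_apply, Matrix.smul_apply, Matrix.one_apply_eq, smul_eq_mul, mul_one]
        have := hca i; linarith
      · simp only [Matrix.sub_apply, Matrix.smul_apply, Matrix.one_apply_ne hij, smul_eq_mul,
          mul_zero, hAdiag i j hij, sub_zero]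
        exact le_refl 0
    · rw [Matrix.fromBlocks_apply₁₂]; exact hB i j
    · rw [Matrix.fromBlocks_apply₂₁]; exact hC i j
    · rw [Matrix.fromBlocks_apply₂₂]
      by_cases hij : i = j
      · subst hij
        simp only [Matrix.sub_apply, Matrix.smul_apply, Matrix.one_apply_eq, smul_eq_mul, mul_one]
        have := hcd i; linarith
      · simp only [Matrix.sub_apply, Matrix.smul_apply, Matrix.one_apply_ne hij, smul_eq_mul,
          mul_zero, hDdiag i j hij, sub_zero]
        exact le_refl 0
  -- key identities
  have hAx₀ : ∀ i, (A *ᵥ x₀) i = θ * g i := by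
    intro i
    rw [hA', Matrix.mulVec_diagonal]
    have hb : x₀ i = θ * ((a i)⁻¹ * g i) := rfl
    have h7 : a i * ((a i)⁻¹ * g i) = g i := by
      rw [← mul_assoc, mul_inv_cancel₀ (hApos i).ne', one_mul]
    rw [hb]
    calc a i * (θ * ((a i)⁻¹ * g i)) = θ * (a i * ((a i)⁻¹ * g i)) := by ring
    _ = θ * g i := by rw [h7]
  have hCx₀ : ∀ i, (C *ᵥ x₀) i = θ * (d i * (M *ᵥ w) i) := by
    intro i
    have e1 : (C *ᵥ x₀) i = ∑ k, ∑ j, θ * (C i k * ((a k)⁻¹ * (B k j * w j))) := by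
      have h0 : (C *ᵥ x₀) i = ∑ k, C i k * (θ * ((a k)⁻¹ * ∑ j, B k j * w j)) := rfl
      rw [h0]
      simp only [Finset.mul_sum]
      exact Finset.sum_congr rfl fun k _ => Finset.sum_congr rfl fun j _ => by ring
    have e2 : θ * (d i * (M *ᵥ w) i) =
        ∑ j, ∑ k, θ * (d i * ((d i)⁻¹ * (C i k * ((a k)⁻¹ * (B k j * w j))))) := by
      have h0 : (M *ᵥ w) i = ∑ j, M i j * w j := rfl
      have h1 : (M *ᵥ w) i = ∑ j, (∑ k, (d i)⁻¹ * (C i k * ((a k)⁻¹ * B k j))) * w j := by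
        rw [h0]
        exact Finset.sum_congr rfl fun j _ => by rw [hM i j]
      rw [h1]
      simp only [Finset.sum_mul, Finset.mul_sum]
      exact Finset.sum_congr rfl fun j _ => Finset.sum_congr rfl fun k _ => by ring
    rw [e1, e2, Finset.sum_comm]
    refine Finset.sum_congr rfl fun j _ => Finset.sum_congr rfl fun k _ => ?_
    have hd7 : d i * ((d i)⁻¹ * (C i k * ((a k)⁻¹ * (B k j * w j)))) =
        C i k * ((a k)⁻¹ * (B k j * w j)) := by
      rw [← mul_assoc, mul_inv_cancel₀ (hDpos i).ne', one_mul]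
    rw [hd7]
  -- subinvariance of u' = (x₀, w) for N at level c + ε
  set u' : Fin n ⊕ Fin n → ℝ := Sum.elim x₀ w with hu'def
  have hNu' : ∀ p, (c + ε) * u' p ≤ (N *ᵥ u') p := by
    have hblock := Matrix.fromBlocks_mulVec
      (c • (1 : Matrix (Fin n) (Fin n) ℝ) - A) B C
      (c • (1 : Matrix (Fin n) (Fin n) ℝ) - D) u'
    rintro (i | i)
    · have hval : (N *ᵥ u') (Sum.inl i) =
          ((c • (1 : Matrix (Fin n) (Fin n) ℝ) - A) *ᵥ x₀) i + (B *ᵥ w) i := by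
        rw [hNdef, hblock]; rfl
      rw [hval, hone A x₀ i, hAx₀ i]
      have hkey : ε * x₀ i ≤ (1 - θ) * g i := by
        have h1 : ε ≤ (1-θ)*aMin/θ := hεle1
        have h3 : (0:ℝ) ≤ (a i)⁻¹ * g i := mul_nonneg (inv_nonneg.mpr (hApos i).le) (hg i)
        have h4 : ε * x₀ i ≤ ((1-θ)*aMin/θ) * x₀ i := mul_le_mul_of_nonneg_right h1 (hx₀ i)
        have h5 : ((1-θ)*aMin/θ) * x₀ i = (1-θ) * (aMin * ((a i)⁻¹ * g i)) := by
          have hb : x₀ i = θ * ((a i)⁻¹ * g i) := rfl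
          rw [hb, div_mul_eq_mul_div, mul_comm θ ((a i)⁻¹ * g i), ← mul_assoc,
            mul_div_assoc, div_self hθpos.ne', mul_one, mul_assoc]
        have h6 : aMin * ((a i)⁻¹ * g i) ≤ a i * ((a i)⁻¹ * g i) :=
          mul_le_mul_of_nonneg_right (haMin_le i) h3
        have h7 : a i * ((a i)⁻¹ * g i) = g i := by
          rw [← mul_assoc, mul_inv_cancel₀ (hApos i).ne', one_mul]
        have h8 : (1-θ) * (aMin * ((a i)⁻¹ * g i)) ≤ (1-θ) * (a i * ((a i)⁻¹ * g i)) :=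
          mul_le_mul_of_nonneg_left h6 (by linarith)
        rw [h7] at h8
        linarith
      have hgw : (B *ᵥ w) i = g i := rfl
      rw [hgw]
      have hux : u' (Sum.inl i) = x₀ i := rfl
      rw [hux]
      linarith
    · have hval : (N *ᵥ u') (Sum.inr i) =
          (C *ᵥ x₀) i + ((c • (1 : Matrix (Fin n) (Fin n) ℝ) - D) *ᵥ w) i := by
        rw [hNdef, hblock]; rfl
      rw [hval, hone D w i, hCx₀ i, hD', Matrix.mulVec_diagonal]
      have huw : u' (Sum.inr i) = w i := rfl
      rw [huw]
      have h1 : ε ≤ (θ*ρ'-1) * d i := by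
        have h2 : ε ≤ (θ*ρ'-1) * dMin := hεle2
        have h3 : (θ*ρ'-1) * dMin ≤ (θ*ρ'-1) * d i :=
          mul_le_mul_of_nonneg_left (hdMin_le i) (by linarith)
        linarith
      have h2 : θ * (d i * (ρ' * w i)) ≤ θ * (d i * (M *ᵥ w) i) := by
        refine mul_le_mul_of_nonneg_left (mul_le_mul_of_nonneg_left (hMw i) (hDpos i).le) hθpos.le
      have h4 : ε * w i ≤ (θ*ρ'-1) * d i * w i := mul_le_mul_of_nonneg_right h1 (hw0 i)
      nlinarith [hw0 i, hDpos i]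
  -- normalize
  set s : ℝ := (∑ i, x₀ i) + (∑ i, w i) with hsdef
  have hwsum : 0 < ∑ i, w i :=
    Finset.sum_pos' (fun i _ => hw0 i) ⟨i₀, Finset.mem_univ i₀, hwi₀⟩
  have hspos : 0 < s := by
    have : 0 ≤ ∑ i, x₀ i := Finset.sum_nonneg fun i _ => hx₀ i
    rw [hsdef]; linarith
  have hsumu' : ∑ p, u' p = s := by
    rw [Fintype.sum_sum_type, hsdef]; rfl
  set u0 : Fin n ⊕ Fin n → ℝ := s⁻¹ • u' with hu0def
  have hu0mem : u0 ∈ stdSimplex ℝ (Fin n ⊕ Fin n) := by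
    constructor
    · intro p
      rw [hu0def]
      have : 0 ≤ u' p := by
        rcases p with i | i
        · exact hx₀ i
        · exact hw0 i
      simp only [Pi.smul_apply, smul_eq_mul]
      exact mul_nonneg (inv_nonneg.mpr hspos.le) this
    · rw [hu0def]
      simp only [Pi.smul_apply, smul_eq_mul, ← Finset.mul_sum]
      rw [hsumu']
      exact inv_mul_cancel₀ hspos.ne'
  have hu0sub : ∀ p, (c + ε) * u0 p ≤ (N *ᵥ u0) p := by
    intro p
    rw [hu0def, Matrix.mulVec_smul]
    simp only [Pi.smul_apply, smul_eq_mul]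
    have h1 := hNu' p
    have h2 : (0:ℝ) ≤ s⁻¹ := inv_nonneg.mpr hspos.le
    calc (c + ε) * (s⁻¹ * u' p) = s⁻¹ * ((c + ε) * u' p) := by ring
    _ ≤ s⁻¹ * (N *ᵥ u') p := mul_le_mul_of_nonneg_left h1 h2
  obtain ⟨r, hr, v, hvmem, hveq⟩ := pf_nonneg N hNnn (c+ε) u0 hu0mem hu0sub
  set x : Fin n → ℝ := fun i => v (Sum.inl i) with hxdef
  set y : Fin n → ℝ := fun i => v (Sum.inr i) with hydef
  have hvel : v = Sum.elim x y := funext fun p => by rcases p with i | i <;> rfl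
  have hblock2 := Matrix.fromBlocks_mulVec
    (c • (1 : Matrix (Fin n) (Fin n) ℝ) - A) B C
    (c • (1 : Matrix (Fin n) (Fin n) ℝ) - D) v
  have heq1 : ∀ i, c * x i - (A *ᵥ x) i + (B *ᵥ y) i = r * x i := by
    intro i
    have h1 := congrFun hveq (Sum.inl i)
    rw [hNdef, hblock2] at h1
    have h2 : ((c • (1 : Matrix (Fin n) (Fin n) ℝ) - A) *ᵥ v ∘ Sum.inl + B *ᵥ v ∘ Sum.inr ⊕ᵥ
        (C *ᵥ v ∘ Sum.inl + (c • (1 : Matrix (Fin n) (Fin n) ℝ) - D) *ᵥ v ∘ Sum.inr))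
        (Sum.inl i) = ((c • (1 : Matrix (Fin n) (Fin n) ℝ) - A) *ᵥ x) i + (B *ᵥ y) i := rfl
    rw [h2] at h1
    rw [hone A x i] at h1
    simpa [smul_eq_mul] using h1
  have heq2 : ∀ i, (C *ᵥ x) i + (c * y i - (D *ᵥ y) i) = r * y i := by
    intro i
    have h1 := congrFun hveq (Sum.inr i)
    rw [hNdef, hblock2] at h1
    have h2 : ((c • (1 : Matrix (Fin n) (Fin n) ℝ) - A) *ᵥ v ∘ Sum.inl + B *ᵥ v ∘ Sum.inr ⊕ᵥ
        (C *ᵥ v ∘ Sum.inl + (c • (1 : Matrix (Fin n) (Fin n) ℝ) - D) *ᵥ v ∘ Sum.inr))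
        (Sum.inr i) = (C *ᵥ x) i + ((c • (1 : Matrix (Fin n) (Fin n) ℝ) - D) *ᵥ y) i := rfl
    rw [h2] at h1
    rw [hone D y i] at h1
    simpa [smul_eq_mul] using h1
  have hlam : 0 < r - c := by linarith
  have hy : y ≠ 0 := by
    intro h0
    have hx0 : ∀ i, x i = 0 := by
      intro i
      have h := heq1 i
      have hBy : (B *ᵥ y) i = 0 := by rw [h0, Matrix.mulVec_zero]; rfl
      have hAx : (A *ᵥ x) i = a i * x i := by rw [hA', Matrix.mulVec_diagonal]
      rw [hBy, hAx] at h
      have hz : (r - c + a i) * x i = 0 := by linarith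
      have hpos : 0 < r - c + a i := by have := hApos i; linarith
      exact (mul_eq_zero.mp hz).resolve_left hpos.ne'
    have hsum := hvmem.2
    rw [Fintype.sum_sum_type] at hsum
    have hz1 : ∑ i, v (Sum.inl i) = 0 := Finset.sum_eq_zero fun i _ => hx0 i
    have hz2 : ∑ i, v (Sum.inr i) = 0 := Finset.sum_eq_zero fun i _ => congrFun h0 i
    rw [hz1, hz2] at hsum
    norm_num at hsum
  refine ⟨r - c, hlam, x, y, fun i => hvmem.1 (Sum.inl i), fun i => hvmem.1 (Sum.inr i), hy, ?_, ?_⟩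
  · funext i
    simp only [Pi.add_apply, Matrix.neg_mulVec, Pi.neg_apply, Pi.smul_apply, smul_eq_mul]
    have := heq1 i
    linarith
  · funext i
    simp only [Pi.add_apply, Matrix.neg_mulVec, Pi.neg_apply, Pi.smul_apply, smul_eq_mul]
    have := heq2 i
    linarith
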